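/- In the setting of a finite undirected graph with symmetric nonnegative adjacency A that is P-multipartite for a partition P = {V_1,...,V_K}, with P-consistent attribute x, m = (1/2)Σ_{i,j}A_{ij} > 0, a_p = (1/(2m))Σ_{i∈V_p}Σ_j A_{ij}, and Σ_p a_p² < 1, the assortativity coefficient ρ(x) = −(Σ_p a_p²)/(1 − Σ_p a_p²) equals −1 if and only if there exist exactly two blocks p ≠ q with a_p = a_q = 1/2 and a_r = 0 for all other blocks r (i.e. the edge mass is supported on exactly two parts, each carrying half of the edge ends). -/

import Mathlib

open Finset
open scoped Classical

/-- Equality characterization for multipartite assortativity: in the multipartite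
setting with `P`-consistent attribute, the assortativity coefficient
`ρ(x) = -(Σ_p a_p²)/(1 - Σ_p a_p²)` equals `-1` if and only if the edge mass is
supported on exactly two blocks, each carrying half of the edge ends. -/
theorem multipartite_assortativity_eq_neg_one_iff
    {V : Type*} [Fintype V] (K : ℕ)
    (A : V → V → ℝ) (P : V → Fin K)
    (hsym : ∀ i j, A i j = A j i)
    (hnn : ∀ i j, 0 ≤ A i j)
    (hmp : ∀ i j, P i = P j → A i j = 0)
    (m : ℝ) (hm : m = (1/2) * ∑ i, ∑ j, A i j) (hmpos : 0 < m)
    (a : Fin K → ℝ)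
    (ha : ∀ p, a p = (1/(2*m)) * ∑ i ∈ Finset.univ.filter (fun i => P i = p), ∑ j, A i j)
    (hS : ∑ p, (a p)^2 < 1) :
    (- (∑ p, (a p)^2) / (1 - ∑ p, (a p)^2) = -1)
      ↔ ∃ p q : Fin K, p ≠ q ∧ a p = 1/2 ∧ a q = 1/2 ∧
          ∀ r, r ≠ p → r ≠ q → a r = 0 := by
  set S := ∑ p, (a p)^2 with hSdef
  have hm2 : (0:ℝ) < 2*m := by linarith
  -- nonnegativity of a
  have hanonneg : ∀ p, 0 ≤ a p := by
    intro p
    rw [ha]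
    apply mul_nonneg (by positivity)
    exact Finset.sum_nonneg fun i _ => Finset.sum_nonneg fun j _ => hnn i j
  -- sum of a is 1
  have hasum : ∑ p, a p = 1 := by
    have h1 : ∑ p, a p = (1/(2*m)) * ∑ p, ∑ i ∈ Finset.univ.filter (fun i => P i = p), ∑ j, A i j := by
      rw [Finset.mul_sum]; exact Finset.sum_congr rfl fun p _ => ha p
    have h2 : ∑ p : Fin K, ∑ i ∈ Finset.univ.filter (fun i => P i = p), ∑ j, A i j
        = ∑ i, ∑ j, A i j := by
      exact Finset.sum_fiberwise Finset.univ P (fun i => ∑ j, A i j)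
    rw [h1, h2]
    field_simp
    linarith [hm]
  -- a p ≤ 1/2
  have hahalf : ∀ p, a p ≤ 1/2 := by
    intro p
    set T : Finset V := Finset.univ.filter (fun i => P i = p) with hT
    set Sp : ℝ := ∑ i ∈ T, ∑ j, A i j with hSp
    have hmemT : ∀ i, i ∈ T ↔ P i = p := by
      intro i; simp [hT]
    have step1 : Sp = ∑ i ∈ T, ∑ j ∈ Tᶜ, A i j := by
      apply Finset.sum_congr rfl
      intro i hi
      have : ∑ j ∈ T, A i j = 0 := by
        apply Finset.sum_eq_zero
        intro j hj
        exact hmp i j (by rw [(hmemT i).1 hi, (hmemT j).1 hj])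
      rw [← Finset.sum_add_sum_compl T (fun j => A i j), this, zero_add]
    have step2 : Sp ≤ ∑ j ∈ Tᶜ, ∑ i, A j i := by
      rw [step1, Finset.sum_comm]
      apply Finset.sum_le_sum
      intro j _
      have : ∑ i ∈ T, A i j = ∑ i ∈ T, A j i :=
        Finset.sum_congr rfl fun i _ => hsym i j
      rw [this]
      exact Finset.sum_le_sum_of_subset_of_nonneg (Finset.subset_univ T)
        (fun i _ _ => hnn j i)
    have step3 : ∑ j ∈ Tᶜ, ∑ i, A j i = 2*m - Sp := by
      have := Finset.sum_add_sum_compl T (fun j => ∑ i, A j i)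
      have htot : ∑ j, ∑ i, A j i = 2*m := by rw [hm]; ring
      rw [htot] at this
      linarith [this]
    have hSple : Sp ≤ m := by linarith [step2, step3]
    have : a p = Sp / (2*m) := by rw [ha]; field_simp [hSp, hT]; rfl
    rw [this, div_le_iff₀ hm2]
    linarith
  have hSne : (1 : ℝ) - S ≠ 0 := by intro h; rw [hSdef] at h; linarith
  have key : (- S / (1 - S) = -1) ↔ S = 1/2 := by
    constructor
    · intro h
      field_simp at h
      linarith
    · intro h; rw [h]; norm_num
  rw [key]
  constructor
  · intro hhalf
    -- each a p ∈ {0, 1/2}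
    have hzero : ∑ p, a p * (1/2 - a p) = 0 := by
      have : ∑ p, a p * (1/2 - a p) = (1/2) * (∑ p, a p) - ∑ p, (a p)^2 := by
        rw [Finset.mul_sum, ← Finset.sum_sub_distrib]
        exact Finset.sum_congr rfl fun p _ => by ring
      rw [this, hasum, ← hSdef, hhalf]; ring
    have heach : ∀ p : Fin K, a p * (1/2 - a p) = 0 := by
      intro p
      have := (Finset.sum_eq_zero_iff_of_nonneg
        (fun q _ => mul_nonneg (hanonneg q) (by linarith [hahalf q]))).1 hzero
      exact this p (Finset.mem_univ p)
    have hdich : ∀ p : Fin K, a p = 0 ∨ a p = 1/2 := by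
      intro p
      rcases mul_eq_zero.1 (heach p) with h | h
      · exact Or.inl h
      · exact Or.inr (by linarith)
    set T2 : Finset (Fin K) := Finset.univ.filter (fun p => a p ≠ 0) with hT2
    have hsumT2 : ∑ p ∈ T2, a p = 1 := by
      rw [← hasum]
      apply Finset.sum_subset (Finset.subset_univ T2)
      intro p _ hp
      by_contra h
      exact hp (by simp [hT2, h])
    have hT2half : ∀ p ∈ T2, a p = 1/2 := by
      intro p hp
      rcases hdich p with h | h
      · exact absurd h (by simpa [hT2] using hp)
      · exact h
    have hcard : T2.card = 2 := by
      have : ∑ p ∈ T2, a p = T2.card * (1/2) := by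
        rw [Finset.sum_congr rfl hT2half]
        simp [Finset.sum_const, nsmul_eq_mul]
      rw [hsumT2] at this
      have : (T2.card : ℝ) = 2 := by linarith
      exact_mod_cast this
    obtain ⟨p, q, hpq, hT2eq⟩ := Finset.card_eq_two.1 hcard
    refine ⟨p, q, hpq, ?_, ?_, ?_⟩
    · exact hT2half p (by rw [hT2eq]; simp)
    · exact hT2half q (by rw [hT2eq]; simp)
    · intro r hrp hrq
      by_contra h
      have : r ∈ T2 := by simp [hT2, h]
      rw [hT2eq] at this
      simp at this
      tauto
  · rintro ⟨p, q, hpq, hp, hq, hrest⟩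
    rw [hSdef]
    rw [← Finset.sum_subset (Finset.subset_univ {p, q})]
    · rw [Finset.sum_pair hpq, hp, hq]; norm_num
    · intro r _ hr
      simp only [Finset.mem_insert, Finset.mem_singleton] at hr
      push_neg at hr
      rw [hrest r hr.1 hr.2]; norm_num
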